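/- The canonical cubic tensor is the third derivative of a generating function (Proposition 3.15, coordinate form): let I ⊔ J = {1,…,n} be a partition and g a C³ function on an open set U ⊆ ℝ^I × ℝ^J; write ∂_k for ∂/∂x_k (k ∈ I) or ∂/∂p_k (k ∈ J). For each index k define ℝ^n-valued functions a_k, b_k on U (the coefficient vectors of Φ(ι_*∂_k) and Φ'(ι_*∂_k) in the canonical flat frames) by: for k ∈ I, a_k = e_k − Σ_{j∈J} (∂_k∂_j g) e_j and b_k = Σ_{i∈I} (∂_k∂_i g) e_i; for k ∈ J, a_k = −Σ_{j∈J} (∂_k∂_j g) e_j and b_k = e_k + Σ_{i∈I} (∂_k∂_i g) e_i. Then for all indices k, l, m and every point of U, ½[ a_l · ∂_k b_m + a_m · ∂_k b_l − (∂_k a_l) · b_m − (∂_k a_m) · b_l ] = ∂_k∂_l∂_m g. In particular the canonical cubic tensor C(∂_k, ∂_l, ∂_m) = ∂_k∂_l∂_m g is totally symmetric. -/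

import Mathlib

open Matrix

lemma fderiv_apply_const_aux {E F : Type*} [NormedAddCommGroup E] [NormedSpace ℝ E]
    [NormedAddCommGroup F] [NormedSpace ℝ F]
    (f : E → (E →L[ℝ] F)) {y : E} (hf : DifferentiableAt ℝ f y) (c v : E) :
    fderiv ℝ (fun z => f z c) y v = fderiv ℝ f y v c := by
  have h : (fun z => f z c) = (ContinuousLinearMap.apply ℝ F c) ∘ f := rfl
  rw [h, fderiv_comp _ (ContinuousLinearMap.apply ℝ F c).differentiableAt hf]
  simp

theorem canonical_cubic_tensor_is_third_derivative (n : ℕ) (I : Finset (Fin n))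
    (U : Set (Fin n → ℝ)) (hU : IsOpen U)
    (g : (Fin n → ℝ) → ℝ) (hg : ContDiffOn ℝ 3 g U)
    (D2 : (Fin n → ℝ) → Fin n → Fin n → ℝ)
    (hD2 : ∀ w k j, D2 w k j
      = fderiv ℝ (fun y => fderiv ℝ g y (Pi.single j 1)) w (Pi.single k 1))
    (D3 : (Fin n → ℝ) → Fin n → Fin n → Fin n → ℝ)
    (hD3 : ∀ w k l m, D3 w k l m = fderiv ℝ (fun y => D2 y l m) w (Pi.single k 1))
    (a b : Fin n → (Fin n → ℝ) → (Fin n → ℝ))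
    (ha : ∀ k w j, a k w j = if j ∈ I then (if j = k then 1 else 0) else -(D2 w k j))
    (hb : ∀ k w i, b k w i = if i ∈ I then D2 w k i else (if i = k then 1 else 0)) :
    ∀ w ∈ U, ∀ k l m : Fin n,
      ((1 : ℝ)/2) * ( a l w ⬝ᵥ fderiv ℝ (b m) w (Pi.single k 1)
              + a m w ⬝ᵥ fderiv ℝ (b l) w (Pi.single k 1)
              - fderiv ℝ (a l) w (Pi.single k 1) ⬝ᵥ b m w
              - fderiv ℝ (a m) w (Pi.single k 1) ⬝ᵥ b l w )
        = D3 w k l m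
      ∧ D3 w k l m = D3 w l k m ∧ D3 w k l m = D3 w k m l := by
  intro w hw k l m
  -- C² regularity of first partial derivatives on U
  have hH2 : ∀ (j : Fin n), ∀ y ∈ U, ContDiffAt ℝ 2
      (fun z => fderiv ℝ g z (Pi.single j 1)) y := by
    intro j y hy
    have h3 : ContDiffAt ℝ 3 g y := hg.contDiffAt (hU.mem_nhds hy)
    exact (h3.fderiv_right (m := 2) (by norm_num)).clm_apply contDiffAt_const
  have hDfH : ∀ (j : Fin n), ∀ y ∈ U, DifferentiableAt ℝ
      (fderiv ℝ (fun z => fderiv ℝ g z (Pi.single j 1))) y := fun j y hy =>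
    ((hH2 j y hy).fderiv_right (m := 1) (by norm_num)).differentiableAt one_ne_zero
  have hD2fun : ∀ (l' j : Fin n), (fun z => D2 z l' j)
      = fun z => fderiv ℝ (fun z' => fderiv ℝ g z' (Pi.single j 1)) z (Pi.single l' 1) :=
    fun l' j => funext fun z => hD2 z l' j
  have hD2f : ∀ (l' j : Fin n), ∀ y ∈ U, DifferentiableAt ℝ (fun z => D2 z l' j) y := by
    intro l' j y hy
    rw [hD2fun]
    exact (((hH2 j y hy).fderiv_right (m := 1) (by norm_num)).clm_apply
      contDiffAt_const).differentiableAt one_ne_zero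
  have hD3eq : ∀ (k' l' j : Fin n), D3 w k' l' j
      = fderiv ℝ (fderiv ℝ (fun z => fderiv ℝ g z (Pi.single j 1))) w
        (Pi.single k' 1) (Pi.single l' 1) := by
    intro k' l' j
    rw [hD3, hD2fun, fderiv_apply_const_aux _ (hDfH j w hw)]
  -- symmetry in the first two indices
  have hsymkl : ∀ k' l' m', D3 w k' l' m' = D3 w l' k' m' := by
    intro k' l' m'
    rw [hD3eq k' l' m', hD3eq l' k' m']
    have hev : ∀ᶠ y in nhds w, HasFDerivAt (fun z => fderiv ℝ g z (Pi.single m' 1))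
        (fderiv ℝ (fun z => fderiv ℝ g z (Pi.single m' 1)) y) y := by
      filter_upwards [hU.mem_nhds hw] with y hy
      exact ((hH2 m' y hy).differentiableAt two_ne_zero).hasFDerivAt
    exact second_derivative_symmetric_of_eventually hev (hDfH m' w hw).hasFDerivAt _ _
  -- symmetry of D2 on U
  have hD2symm : ∀ y ∈ U, ∀ l' m', D2 y l' m' = D2 y m' l' := by
    intro y hy l' m'
    have hgd : DifferentiableAt ℝ (fderiv ℝ g) y :=
      ((hg.contDiffAt (hU.mem_nhds hy)).fderiv_right (m := 2)
        (by norm_num)).differentiableAt two_ne_zero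
    have h1 : D2 y l' m' = fderiv ℝ (fderiv ℝ g) y (Pi.single l' 1) (Pi.single m' 1) := by
      rw [hD2]; exact fderiv_apply_const_aux _ hgd _ _
    have h2 : D2 y m' l' = fderiv ℝ (fderiv ℝ g) y (Pi.single m' 1) (Pi.single l' 1) := by
      rw [hD2]; exact fderiv_apply_const_aux _ hgd _ _
    have hev : ∀ᶠ z in nhds y, HasFDerivAt g (fderiv ℝ g z) z := by
      filter_upwards [hU.mem_nhds hy] with z hz
      exact ((hg.contDiffAt (hU.mem_nhds hz)).differentiableAt (by norm_num)).hasFDerivAt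
    rw [h1, h2, second_derivative_symmetric_of_eventually hev hgd.hasFDerivAt _ _]
  -- symmetry in the last two indices
  have hsymlm : ∀ k' l' m', D3 w k' l' m' = D3 w k' m' l' := by
    intro k' l' m'
    rw [hD3 w k' l' m', hD3 w k' m' l']
    have hev : (fun y => D2 y l' m') =ᶠ[nhds w] fun y => D2 y m' l' := by
      filter_upwards [hU.mem_nhds hw] with y hy
      exact hD2symm y hy l' m'
    rw [hev.fderiv_eq]
  -- component formulas for the derivatives of b and a
  have hbeq : ∀ (m' : Fin n) (i : Fin n), (fun y => b m' y i)
      = if i ∈ I then (fun y => D2 y m' i) else (fun _ => if i = m' then (1:ℝ) else 0) := by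
    intro m' i
    by_cases h : i ∈ I <;> simp only [h, if_true, if_false] <;> funext y <;> rw [hb] <;>
      simp [h]
  have hbdiff : ∀ (m' : Fin n) (i : Fin n), DifferentiableAt ℝ (fun y => b m' y i) w := by
    intro m' i
    rw [hbeq]
    by_cases h : i ∈ I
    · simpa [h] using hD2f m' i w hw
    · simp [h]
  have hbcomp : ∀ (m' : Fin n) (i : Fin n),
      fderiv ℝ (b m') w (Pi.single k 1) i = if i ∈ I then D3 w k m' i else 0 := by
    intro m' i
    have hpi : fderiv ℝ (b m') w = ContinuousLinearMap.pi
        (fun i => fderiv ℝ (fun y => b m' y i) w) := fderiv_pi (hbdiff m')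
    rw [hpi]
    simp only [ContinuousLinearMap.pi_apply]
    rw [hbeq m' i]
    by_cases h : i ∈ I
    · simp only [h, if_true]
      exact (hD3 w k m' i).symm
    · simp [h]
  have haeq : ∀ (l' : Fin n) (j : Fin n), (fun y => a l' y j)
      = if j ∈ I then (fun _ => if j = l' then (1:ℝ) else 0) else (fun y => -(D2 y l' j)) := by
    intro l' j
    by_cases h : j ∈ I <;> simp only [h, if_true, if_false] <;> funext y <;> rw [ha] <;>
      simp [h]
  have hadiff : ∀ (l' : Fin n) (j : Fin n), DifferentiableAt ℝ (fun y => a l' y j) w := by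
    intro l' j
    rw [haeq]
    by_cases h : j ∈ I
    · simp [h]
    · simpa [h] using (hD2f l' j w hw).neg
  have hacomp : ∀ (l' : Fin n) (j : Fin n),
      fderiv ℝ (a l') w (Pi.single k 1) j = if j ∈ I then 0 else -(D3 w k l' j) := by
    intro l' j
    have hpi : fderiv ℝ (a l') w = ContinuousLinearMap.pi
        (fun j => fderiv ℝ (fun y => a l' y j) w) := fderiv_pi (hadiff l')
    rw [hpi]
    simp only [ContinuousLinearMap.pi_apply]
    rw [haeq l' j]
    by_cases h : j ∈ I
    · simp [h]
    · simp only [h, if_false]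
      rw [fderiv_fun_neg]
      simp only [ContinuousLinearMap.neg_apply, neg_inj]
      exact (hD3 w k l' j).symm
  -- dot products
  have hdot1 : ∀ (l' m' : Fin n), a l' w ⬝ᵥ fderiv ℝ (b m') w (Pi.single k 1)
      = if l' ∈ I then D3 w k m' l' else 0 := by
    intro l' m'
    rw [dotProduct, Finset.sum_eq_single l']
    · rw [ha, hbcomp]
      by_cases h : l' ∈ I <;> simp [h]
    · intro j _ hj
      rw [ha, hbcomp]
      by_cases h : j ∈ I <;> simp [h, hj]
    · simp
  have hdot2 : ∀ (l' m' : Fin n), fderiv ℝ (a l') w (Pi.single k 1) ⬝ᵥ b m' w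
      = if m' ∈ I then 0 else -(D3 w k l' m') := by
    intro l' m'
    rw [dotProduct, Finset.sum_eq_single m']
    · rw [hacomp, hb]
      by_cases h : m' ∈ I <;> simp [h]
    · intro j _ hj
      rw [hacomp, hb]
      by_cases h : j ∈ I <;> simp [h, hj]
    · simp
  refine ⟨?_, hsymkl k l m, hsymlm k l m⟩
  rw [hdot1 l m, hdot1 m l, hdot2 l m, hdot2 m l]
  have hml : D3 w k m l = D3 w k l m := (hsymlm k l m).symm
  by_cases hl : l ∈ I <;> by_cases hm : m ∈ I <;> simp [hl, hm, hml] <;> ring
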